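/- arXiv:1802.06511 — 4 statements merged into one kernel-verified Lean document; each statement's English description precedes it below -/
import Mathlib

section
/- Let G be a perfect graph on n vertices, let c ≥ 2 be an integer, let H be a disjoint union of n cliques each of size c−2, and let G' = G ⊕ H. Then for every integer k < n: G has an odd cycle transversal of size k if and only if G' has a c-colorable vertex set of size |V(G')| − k. -/
/-- `S` is a `c`-colorable vertex set in `G`. -/
def ColSet {V : Type*} (G : SimpleGraph V) (c : ℕ) (S : Finset V) : Prop :=
  (G.induce (S : Set V)).Colorable c

/-- `G` is perfect: every induced subgraph has chromatic number equal to its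
clique number, stated via the colorability/clique-free characterization. -/
def IsPerfect {V : Type*} (G : SimpleGraph V) : Prop :=
  ∀ (S : Set V) (c : ℕ), (G.induce S).Colorable c ↔ (G.induce S).CliqueFree (c + 1)

/-- The join of two vertex-disjoint graphs, on the sum type. -/
def SimpleGraph.join {V W : Type*} (G : SimpleGraph V) (H : SimpleGraph W) :
    SimpleGraph (V ⊕ W) where
  Adj x y :=
    match x, y with
    | .inl a, .inl b => G.Adj a b
    | .inr a, .inr b => H.Adj a b
    | .inl _, .inr _ => True
    | .inr _, .inl _ => True
  symm := ⟨by rintro (a | a) (b | b) h <;> simp_all <;> exact h.symm⟩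
  loopless := ⟨by
    rintro (a | a) h
    · exact G.irrefl h
    · exact H.irrefl h⟩

/-- The disjoint union of `n` cliques, each of size `m`. -/
def cliquesGraph (n m : ℕ) : SimpleGraph (Fin n × Fin m) where
  Adj x y := x.1 = y.1 ∧ x ≠ y
  symm := ⟨by rintro x y ⟨h1, h2⟩; exact ⟨h1.symm, h2.symm⟩⟩
  loopless := ⟨by rintro x ⟨h1, h2⟩; exact h2 rfl⟩

lemma colorable_induce_mono {V : Type*} (G : SimpleGraph V) {s t : Set V} (h : s ⊆ t) {c : ℕ}
    (hc : (G.induce t).Colorable c) : (G.induce s).Colorable c := by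
  obtain ⟨C⟩ := hc
  exact ⟨SimpleGraph.Coloring.mk (fun v => C ⟨v.1, h v.2⟩) (fun {a b} hab => C.valid hab)⟩

theorem oct_iff_large_colorable_set_in_join {V : Type*} [Fintype V] [DecidableEq V]
    (G : SimpleGraph V) (hG : IsPerfect G) (c : ℕ) (hc : 2 ≤ c) (k : ℕ)
    (hk : k < Fintype.card V) :
    (∃ S : Finset V, S.card = k ∧ (G.induce ((↑(Sᶜ) : Set V))).Colorable 2) ↔
    (∃ T : Finset (V ⊕ Fin (Fintype.card V) × Fin (c - 2)),
        T.card = Fintype.card (V ⊕ Fin (Fintype.card V) × Fin (c - 2)) - k ∧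
        ColSet (G.join (cliquesGraph (Fintype.card V) (c - 2))) c T) := by
  have hcardsum : Fintype.card (V ⊕ Fin (Fintype.card V) × Fin (c - 2)) =
      Fintype.card V + Fintype.card V * (c - 2) := by
    simp [Fintype.card_sum, Fintype.card_prod]
  set n := Fintype.card V with hn
  set m := c - 2 with hm
  constructor
  · rintro ⟨S, hScard, ⟨C2⟩⟩
    refine ⟨Sᶜ.disjSum Finset.univ, ?_, ?_⟩
    · rw [Finset.card_disjSum, Finset.card_compl, hScard, hcardsum]
      simp only [Finset.card_univ, Fintype.card_prod, Fintype.card_fin]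
      omega
    · refine ⟨SimpleGraph.Coloring.mk (fun x =>
        match x with
        | ⟨.inl v, hv⟩ =>
            if h : v ∈ Sᶜ then Fin.castLE hc (C2 ⟨v, h⟩) else ⟨0, by omega⟩
        | ⟨.inr p, hp⟩ => ⟨2 + p.2.1, by have := p.2.2; omega⟩) ?_⟩
      rintro ⟨(a | a), ha⟩ ⟨(b | b), hb⟩ hadj
      · have ha' : a ∈ Sᶜ := by
          simpa using Finset.inl_mem_disjSum.mp (Finset.mem_coe.mp ha)
        have hb' : b ∈ Sᶜ := by
          simpa using Finset.inl_mem_disjSum.mp (Finset.mem_coe.mp hb)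
        have hadj' : G.Adj a b := hadj
        simp only [dif_pos ha', dif_pos hb']
        intro heq
        exact C2.valid (show (G.induce (↑(Sᶜ) : Set V)).Adj ⟨a, ha'⟩ ⟨b, hb'⟩ from hadj')
          (Fin.castLE_injective hc heq)
      · have ha' : a ∈ Sᶜ := by
          simpa using Finset.inl_mem_disjSum.mp (Finset.mem_coe.mp ha)
        simp only [dif_pos ha']
        intro heq
        have h1 : ((C2 ⟨a, ha'⟩ : Fin 2) : ℕ) < 2 := (C2 ⟨a, ha'⟩).2
        have := congrArg Fin.val heq
        simp [Fin.castLE] at this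
        omega
      · have hb' : b ∈ Sᶜ := by
          simpa using Finset.inl_mem_disjSum.mp (Finset.mem_coe.mp hb)
        simp only [dif_pos hb']
        intro heq
        have h1 : ((C2 ⟨b, hb'⟩ : Fin 2) : ℕ) < 2 := (C2 ⟨b, hb'⟩).2
        have := congrArg Fin.val heq
        simp [Fin.castLE] at this
        omega
      · obtain ⟨h1, h2⟩ := (hadj : (cliquesGraph n m).Adj a b)
        intro heq
        have := congrArg Fin.val heq
        simp only [add_right_inj] at this
        exact h2 (Prod.ext h1 (Fin.val_injective this))
  · rintro ⟨T, hTcard, ⟨CT⟩⟩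
    rw [hcardsum] at hTcard
    have hsumcard : T.toLeft.card + T.toRight.card = T.card :=
      Finset.card_toLeft_add_card_toRight
    have hAle : T.toLeft.card ≤ n := Finset.card_le_univ _
    -- pigeonhole: some clique fully inside T.toRight
    have hfull : ∃ i : Fin n, ∀ j : Fin m, (i, j) ∈ T.toRight := by
      by_contra hcon
      push_neg at hcon
      choose f hf using hcon
      rcases Nat.eq_zero_or_pos m with hm0 | hmpos
      · have hnpos : 0 < n := lt_of_le_of_lt (Nat.zero_le k) hk
        exact absurd (f ⟨0, hnpos⟩).2 (by omega)
      · have hBcard : T.toRight.card ≤ n * (m - 1) := by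
          have hfib : ∀ i : Fin n,
              (T.toRight.filter (fun p => p.1 = i)).card ≤ m - 1 := by
            intro i
            have hinj : Set.InjOn Prod.snd
                ((T.toRight.filter (fun p => p.1 = i)) : Set (Fin n × Fin m)) := by
              intro p hp q hq hpq
              simp only [Finset.coe_filter, Set.mem_setOf_eq] at hp hq
              exact Prod.ext (hp.2.trans hq.2.symm) hpq
            calc (T.toRight.filter (fun p => p.1 = i)).card
                = ((T.toRight.filter (fun p => p.1 = i)).image Prod.snd).card :=
                  (Finset.card_image_of_injOn hinj).symm
              _ ≤ (Finset.univ.erase (f i)).card := by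
                  apply Finset.card_le_card
                  intro j hj
                  simp only [Finset.mem_image, Finset.mem_filter] at hj
                  obtain ⟨p, ⟨hpB, hpi⟩, hpj⟩ := hj
                  refine Finset.mem_erase.mpr ⟨?_, Finset.mem_univ _⟩
                  intro hji
                  apply hf i
                  have : p = (i, f i) := Prod.ext hpi (hpj.trans hji ▸ rfl)
                  rwa [this] at hpB
              _ = m - 1 := by
                  rw [Finset.card_erase_of_mem (Finset.mem_univ _)]
                  simp
          calc T.toRight.card
              = ∑ i : Fin n, (T.toRight.filter (fun p => p.1 = i)).card :=
                Finset.card_eq_sum_card_fiberwise (fun p _ => Finset.mem_univ p.1)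
            _ ≤ ∑ _i : Fin n, (m - 1) := Finset.sum_le_sum (fun i _ => hfib i)
            _ = n * (m - 1) := by simp [mul_comm]
        have hnm : n * (m - 1) + n = n * m := by
          rw [Nat.mul_sub_one, Nat.sub_add_cancel (Nat.le_mul_of_pos_right n hmpos)]
        generalize hq : n * m = q at *
        omega
    obtain ⟨i₀, hi₀⟩ := hfull
    have hmemT : ∀ j : Fin m, (Sum.inr (i₀, j) : V ⊕ Fin n × Fin m) ∈ T :=
      fun j => Finset.mem_toRight.mp (hi₀ j)
    set cliqueColors : Finset (Fin c) :=
      Finset.univ.image (fun j : Fin m => CT ⟨Sum.inr (i₀, j), hmemT j⟩) with hcc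
    have hccCard : cliqueColors.card = m := by
      rw [hcc, Finset.card_image_of_injOn, Finset.card_univ, Fintype.card_fin]
      intro j _ j' _ hjj
      by_contra hne
      exact CT.valid
        (show ((G.join (cliquesGraph n m)).induce (↑T : Set _)).Adj
          ⟨Sum.inr (i₀, j), hmemT j⟩ ⟨Sum.inr (i₀, j'), hmemT j'⟩ from
          ⟨rfl, fun h => hne (congrArg Prod.snd h)⟩) hjj
    have hAvoid : ∀ (v : V) (hv : (Sum.inl v : V ⊕ Fin n × Fin m) ∈ T),
        CT ⟨Sum.inl v, hv⟩ ∉ cliqueColors := by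
      intro v hv hmem
      rw [hcc, Finset.mem_image] at hmem
      obtain ⟨j, _, hj⟩ := hmem
      exact CT.valid
        (show ((G.join (cliquesGraph n m)).induce (↑T : Set _)).Adj
          ⟨Sum.inl v, hv⟩ ⟨Sum.inr (i₀, j), hmemT j⟩ from trivial) hj.symm
    -- T.toLeft has at least n - k vertices
    have hBle : T.toRight.card ≤ n * m := by
      calc T.toRight.card ≤ Fintype.card (Fin n × Fin m) := Finset.card_le_univ _
        _ = n * m := by simp
    have hAge : n - k ≤ T.toLeft.card := by
      generalize hq : n * m = q at *
      omega
    obtain ⟨A', hA'sub, hA'card⟩ := Finset.exists_subset_card_eq hAge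
    have hA'memT : ∀ v ∈ A', (Sum.inl v : V ⊕ Fin n × Fin m) ∈ T :=
      fun v hv => Finset.mem_toLeft.mp (hA'sub hv)
    refine ⟨A'ᶜ, ?_, ?_⟩
    · rw [Finset.card_compl, hA'card]
      omega
    · rw [compl_compl]
      have C' : (G.induce (↑A' : Set V)).Coloring {x : Fin c // x ∈ cliqueColorsᶜ} := by
        refine SimpleGraph.Coloring.mk
          (fun v => ⟨CT ⟨Sum.inl v.1, hA'memT v.1 (Finset.mem_coe.mp v.2)⟩,
            Finset.mem_compl.mpr (hAvoid v.1 _)⟩) ?_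
        intro v w hvw
        intro heq
        exact CT.valid
          (show ((G.join (cliquesGraph n m)).induce (↑T : Set _)).Adj
            ⟨Sum.inl v.1, _⟩ ⟨Sum.inl w.1, _⟩ from hvw)
          (congrArg Subtype.val heq)
      have := C'.colorable
      rwa [Fintype.card_coe, Finset.card_compl, hccCard, Fintype.card_fin,
        show c - m = 2 by omega] at this
end

section
/- Let G be a graph and let H be the split graph with clique part V(G) and independent part E(G), where v ∈ V(G) is adjacent to e ∈ E(G) in H if and only if v is not an endpoint of e. Then for every independent set I of size |V(G)| − c in G, the set φ(I) = V(H) \ I is a c-colorable set of size |E(G)| + c in H. -/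
open Finset

/-- The split graph associated with `G`: its clique part is `V(G)`, its independent
part is `E(G)`, and a vertex is adjacent to an edge iff it is not an endpoint. -/
def splitOf {V : Type*} (G : SimpleGraph V) : SimpleGraph (V ⊕ G.edgeSet) where
  Adj x y :=
    match x, y with
    | .inl u, .inl v => u ≠ v
    | .inl u, .inr e => u ∉ (e : Sym2 V)
    | .inr e, .inl u => u ∉ (e : Sym2 V)
    | .inr _, .inr _ => False
  symm := by
    constructor
    rintro (u | e) (v | f) h
    · exact h.symm
    · exact h
    · exact h
    · exact h.elim
  loopless := by
    constructor
    rintro (u | e) h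
    · exact h rfl
    · exact h

theorem phi_colorable {V : Type*} [Fintype V] [DecidableEq V] (G : SimpleGraph V)
    [DecidableRel G.Adj] (c : ℕ) (I : Finset V)
    (hindep : ∀ u ∈ I, ∀ v ∈ I, ¬ G.Adj u v)
    (hcard : I.card + c = Fintype.card V) :
    ColSet (splitOf G) c (Finset.univ \ I.image (Sum.inl : V → V ⊕ G.edgeSet)) ∧
      (Finset.univ \ I.image (Sum.inl : V → V ⊕ G.edgeSet)).card = Fintype.card G.edgeSet + c := by
  classical
  have hpick : ∀ e : G.edgeSet, ∃ v : V, v ∈ (e : Sym2 V) ∧ v ∉ I := by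
    rintro ⟨e, he⟩
    induction e with
    | _ a b =>
      rw [SimpleGraph.mem_edgeSet] at he
      by_cases ha : a ∈ I
      · by_cases hb : b ∈ I
        · exact absurd (hindep a ha b hb) (fun h => h he)
        · exact ⟨b, Sym2.mem_mk_right a b, hb⟩
      · exact ⟨a, Sym2.mem_mk_left a b, ha⟩
  have hcardsub : Fintype.card {v : V // v ∉ I} = c := by
    have h1 := Fintype.card_subtype_compl (fun v : V => v ∈ I)
    have h2 : Fintype.card {x : V // x ∈ I} = I.card := Fintype.card_coe I
    omega
  let g : {v : V // v ∉ I} ≃ Fin c := Fintype.equivFinOfCardEq hcardsub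
  set S := (Finset.univ \ I.image (Sum.inl : V → V ⊕ G.edgeSet)) with hS
  constructor
  · -- colorable
    have hmemS : ∀ v : V, (Sum.inl v : V ⊕ G.edgeSet) ∈ S ↔ v ∉ I := by
      intro v
      simp [hS, Sum.inl.injEq]
    let col : ((S : Finset (V ⊕ G.edgeSet)) : Set (V ⊕ G.edgeSet)) → Fin c := fun x =>
      match x with
      | ⟨.inl v, hv⟩ => g ⟨v, (hmemS v).1 (Finset.mem_coe.mp hv)⟩
      | ⟨.inr e, _⟩ => g ⟨(hpick e).choose, (hpick e).choose_spec.2⟩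
    refine ⟨SimpleGraph.Coloring.mk col ?_⟩
    rintro ⟨x, hx⟩ ⟨y, hy⟩ hadj
    have hadj' : (splitOf G).Adj x y := hadj
    rcases x with u | e <;> rcases y with v | f
    · -- inl inl
      simp only [col]
      intro h
      have := g.injective h
      exact hadj' (by simpa using congrArg Subtype.val this)
    · simp only [col]
      intro h
      have := g.injective h
      have huv : u = (hpick f).choose := by simpa using congrArg Subtype.val this
      exact hadj' (huv ▸ (hpick f).choose_spec.1)
    · simp only [col]
      intro h
      have := g.injective h
      have huv : (hpick e).choose = v := by simpa using congrArg Subtype.val this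
      exact hadj' (huv ▸ (hpick e).choose_spec.1)
    · exact absurd hadj' (by simp [splitOf])
  · -- cardinality
    have hsub : I.image (Sum.inl : V → V ⊕ G.edgeSet) ⊆ univ := subset_univ _
    rw [hS, card_sdiff_of_subset hsub, card_image_of_injective _ Sum.inl_injective,
      card_univ, Fintype.card_sum]
    omega
end

section
/- Let G be a graph and H the split graph with clique part V(G) and independent part E(G), where v ∈ V(G) is adjacent to e ∈ E(G) in H iff v is not an endpoint of e. If S is a c-colorable set of size |E(G)| + c in H, then E(G) ⊆ S and V(G) \ S is an independent set of size |V(G)| − c in G. -/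
open Finset

theorem colorable_set_gives_independent_set {V : Type*} [Fintype V] [DecidableEq V]
    (G : SimpleGraph V) [DecidableRel G.Adj] (c : ℕ)
    (S : Finset (V ⊕ G.edgeSet)) (hS : ColSet (splitOf G) c S)
    (hcard : S.card = Fintype.card G.edgeSet + c) :
    (∀ e : G.edgeSet, Sum.inr e ∈ S) ∧
    (∀ u ∈ Finset.univ.filter (fun v : V => Sum.inl v ∉ S),
      ∀ v ∈ Finset.univ.filter (fun v : V => Sum.inl v ∉ S), ¬ G.Adj u v) ∧
    (Finset.univ.filter (fun v : V => Sum.inl v ∉ S)).card + c = Fintype.card V := by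
  classical
  obtain ⟨C⟩ := hS
  set A : Finset V := univ.filter (fun v => Sum.inl v ∈ S) with hA
  set f : V → ℕ := fun v =>
    if h : Sum.inl v ∈ S then ((C ⟨Sum.inl v, h⟩ : Fin c) : ℕ) else 0 with hf
  have hmemA : ∀ v ∈ A, Sum.inl v ∈ S := by
    intro v hv; simpa [hA] using hv
  have hmaps : ∀ v ∈ A, f v ∈ Finset.range c := by
    intro v hv
    have h := hmemA v hv
    simp only [hf, dif_pos h]
    exact Finset.mem_range.2 (C ⟨Sum.inl v, h⟩).isLt
  have hinj : Set.InjOn f A := by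
    intro x hx y hy hxy
    by_contra hne
    have hxS := hmemA x hx
    have hyS := hmemA y hy
    rw [hf] at hxy
    simp only [dif_pos hxS, dif_pos hyS] at hxy
    have hadj : ((splitOf G).induce (S : Set _)).Adj ⟨Sum.inl x, hxS⟩ ⟨Sum.inl y, hyS⟩ := by
      show (splitOf G).Adj (Sum.inl x) (Sum.inl y)
      exact hne
    exact C.valid hadj (Fin.val_injective hxy)
  have hAle : A.card ≤ c := by
    simpa using Finset.card_le_card_of_injOn f hmaps hinj
  set U : Finset (V ⊕ G.edgeSet) :=
    A.image Sum.inl ∪ (univ : Finset G.edgeSet).image Sum.inr with hU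
  have hSU : S ⊆ U := by
    intro x hx
    rcases x with v | e
    · exact Finset.mem_union_left _ (Finset.mem_image.2 ⟨v, by simp [hA, hx], rfl⟩)
    · exact Finset.mem_union_right _ (Finset.mem_image.2 ⟨e, Finset.mem_univ _, rfl⟩)
  have hUcard : U.card = A.card + Fintype.card G.edgeSet := by
    rw [hU, Finset.card_union_of_disjoint]
    · rw [Finset.card_image_of_injective _ Sum.inl_injective,
        Finset.card_image_of_injective _ Sum.inr_injective, Finset.card_univ]
    · simp [Finset.disjoint_left]
  have hUle : U.card ≤ S.card := by
    rw [hUcard, hcard]; omega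
  have hUS : U = S := (Finset.eq_of_subset_of_card_le hSU hUle).symm
  have hAc : A.card = c := by
    have := hUcard
    rw [hUS, hcard] at this
    omega
  have h1 : ∀ e : G.edgeSet, Sum.inr e ∈ S := by
    intro e
    rw [← hUS]
    exact Finset.mem_union_right _ (Finset.mem_image.2 ⟨e, Finset.mem_univ _, rfl⟩)
  refine ⟨h1, ?_, ?_⟩
  · intro u hu v hv hadj
    simp only [Finset.mem_filter] at hu hv
    set e : G.edgeSet := ⟨s(u, v), hadj⟩ with he
    have heS : Sum.inr e ∈ S := h1 e
    have himg : A.image f = Finset.range c := by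
      apply Finset.eq_of_subset_of_card_le
      · intro x hx; obtain ⟨w, hw, rfl⟩ := Finset.mem_image.1 hx; exact hmaps w hw
      · rw [Finset.card_range, Finset.card_image_of_injOn hinj, hAc]
    have hmem : ((C ⟨Sum.inr e, heS⟩ : Fin c) : ℕ) ∈ Finset.range c :=
      Finset.mem_range.2 (C ⟨Sum.inr e, heS⟩).isLt
    rw [← himg] at hmem
    obtain ⟨w, hw, hfw⟩ := Finset.mem_image.1 hmem
    have hwS := hmemA w hw
    rw [hf] at hfw
    simp only [dif_pos hwS] at hfw
    have hwe : w ∉ (e : Sym2 V) := by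
      rw [he]
      simp only [Sym2.mem_iff]
      rintro (rfl | rfl)
      · exact hu.2 hwS
      · exact hv.2 hwS
    have hadj' : ((splitOf G).induce (S : Set _)).Adj ⟨Sum.inl w, hwS⟩ ⟨Sum.inr e, heS⟩ := by
      show (splitOf G).Adj (Sum.inl w) (Sum.inr e)
      exact hwe
    exact C.valid hadj' (Fin.val_injective hfw)
  · have := Finset.card_filter_add_card_filter_not
      (s := (univ : Finset V)) (p := fun v => Sum.inl v ∈ S)
    rw [Finset.card_univ] at this
    have hA' : (univ.filter (fun v : V => Sum.inl v ∈ S)).card = c := hAc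
    omega
end

section
/- Let G be a graph with vertices s, t at distance ℓ, and for 0 ≤ i ≤ ℓ let D_i be the set of vertices at distance i from s and distance ℓ − i from t. Define H' on vertex set (⋃ D_i) ∪ (⋃ C_i) where each C_i is a new clique of c−1 vertices: each D_i is a clique, u ∈ D_i and v ∈ D_{i+1} are adjacent iff they are non-adjacent in G, and every vertex of C_i is adjacent to all of D_i ∪ D_{i+1} (D_{ℓ+1} = ∅). Then H' is a co-comparability graph. -/
open Finset

/-- `G` is a co-comparability graph: there is a linear order on the vertices such
that whenever `u ≺ v ≺ w` and `u,w` are adjacent, `u,v` or `v,w` are adjacent. -/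
def IsCoComparability {W : Type*} (G : SimpleGraph W) : Prop :=
  ∃ r : W → W → Prop, IsStrictTotalOrder W r ∧
    ∀ u v w, r u v → r v w → G.Adj u w → G.Adj u v ∨ G.Adj v w

/-- The graph `H'` of the shortest-path reduction.  Its vertices are the vertices of
`G` lying on shortest `s`–`t` paths (the levels `D_i`) together with cliques `C_i`
(`i ≤ ℓ`) of `c - 1` new vertices each.  Each `D_i` is a clique; `u ∈ D_i` and
`v ∈ D_{i+1}` are adjacent iff non-adjacent in `G`; `C_i` is completely joined to
`D_i ∪ D_{i+1}`. -/
def spGraph {V : Type*} (G : SimpleGraph V) (s t : V) (ℓ c : ℕ) :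
    SimpleGraph ({v : V // G.dist s v + G.dist v t = ℓ} ⊕ Fin (ℓ + 1) × Fin (c - 1)) where
  Adj x y :=
    match x, y with
    | .inl u, .inl v =>
        (G.dist s u.1 = G.dist s v.1 ∧ u ≠ v) ∨
        (G.dist s v.1 = G.dist s u.1 + 1 ∧ ¬ G.Adj u.1 v.1) ∨
        (G.dist s u.1 = G.dist s v.1 + 1 ∧ ¬ G.Adj u.1 v.1)
    | .inl u, .inr p => G.dist s u.1 = (p.1 : ℕ) ∨ G.dist s u.1 = (p.1 : ℕ) + 1
    | .inr p, .inl u => G.dist s u.1 = (p.1 : ℕ) ∨ G.dist s u.1 = (p.1 : ℕ) + 1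
    | .inr p, .inr q => p.1 = q.1 ∧ p ≠ q
  symm := by
    constructor
    rintro (u | p) (v | q) h
    · rcases h with ⟨h1, h2⟩ | ⟨h1, h2⟩ | ⟨h1, h2⟩
      · exact Or.inl ⟨h1.symm, h2.symm⟩
      · exact Or.inr (Or.inr ⟨h1, fun a => h2 a.symm⟩)
      · exact Or.inr (Or.inl ⟨h1, fun a => h2 a.symm⟩)
    · exact h
    · exact h
    · exact ⟨h.1.symm, h.2.symm⟩
  loopless := by
    constructor
    rintro (u | p) h
    · rcases h with ⟨_, h2⟩ | ⟨h1, _⟩ | ⟨h1, _⟩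
      · exact h2 rfl
      · omega
      · omega
    · exact h.2 rfl

theorem spGraph_isCoComparability {V : Type*} (G : SimpleGraph V) (s t : V)
    (ℓ c : ℕ) (hreach : G.Reachable s t) (hdist : G.dist s t = ℓ) :
    IsCoComparability (spGraph G s t ℓ c) := by

  classical
  let L : ({v : V // G.dist s v + G.dist v t = ℓ} ⊕ Fin (ℓ + 1) × Fin (c - 1)) → ℕ :=
    fun x => match x with
    | .inl u => 2 * G.dist s u.1
    | .inr p => 2 * (p.1 : ℕ) + 1
  let r : ({v : V // G.dist s v + G.dist v t = ℓ} ⊕ Fin (ℓ + 1) × Fin (c - 1)) →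
      ({v : V // G.dist s v + G.dist v t = ℓ} ⊕ Fin (ℓ + 1) × Fin (c - 1)) → Prop :=
    fun x y => L x < L y ∨ (L x = L y ∧ WellOrderingRel x y)
  have hsame : ∀ x y, L x = L y → x ≠ y → (spGraph G s t ℓ c).Adj x y := by
    rintro (a | p) (b | q) h hne
    · exact Or.inl ⟨by simpa [L] using h, fun hab => hne (by rw [hab])⟩
    · simp only [L] at h; omega
    · simp only [L] at h; omega
    · refine ⟨?_, fun hpq => hne (by rw [hpq])⟩
      have : 2 * (p.1 : ℕ) + 1 = 2 * (q.1 : ℕ) + 1 := h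
      exact Fin.ext (by omega)
  have htri : ∀ x y, r x y ∨ x = y ∨ r y x := by
    intro x y
    rcases lt_trichotomy (L x) (L y) with h | h | h
    · exact Or.inl (Or.inl h)
    · rcases trichotomous_of WellOrderingRel x y with hw | hw | hw
      · exact Or.inl (Or.inr ⟨h, hw⟩)
      · exact Or.inr (Or.inl hw)
      · exact Or.inr (Or.inr (Or.inr ⟨h.symm, hw⟩))
    · exact Or.inr (Or.inr (Or.inl h))
  have hirr0 : ∀ x, ¬ r x x := by
    rintro x (h | ⟨_, h⟩)
    · exact lt_irrefl _ h
    · exact irrefl_of WellOrderingRel x h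
  have htrans : ∀ x y z, r x y → r y z → r x z := by
    rintro x y z (h | ⟨h, hw⟩) (h' | ⟨h', hw'⟩)
    · exact Or.inl (h.trans h')
    · exact Or.inl (h' ▸ h)
    · exact Or.inl (h ▸ h')
    · exact Or.inr ⟨h.trans h', trans_of WellOrderingRel hw hw'⟩
  refine ⟨r, { trichotomous := fun a b hab hba => (htri a b).elim (fun h => absurd h hab) (fun h => h.elim id (fun h => absurd h hba)), irrefl := hirr0, trans := htrans }, ?_⟩
  intro u v w huv hvw hadj
  have hne_uv : u ≠ v := fun h => hirr0 u (h ▸ huv)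
  have hne_vw : v ≠ w := fun h => hirr0 v (h ▸ hvw)
  by_cases h1 : L u = L v
  · exact Or.inl (hsame u v h1 hne_uv)
  by_cases h2 : L v = L w
  · exact Or.inr (hsame v w h2 hne_vw)
  have hu_lt : L u < L v := by
    rcases huv with h | ⟨h, _⟩
    · exact h
    · exact absurd h h1
  have hv_lt : L v < L w := by
    rcases hvw with h | ⟨h, _⟩
    · exact h
    · exact absurd h h2
  -- analyze adjacency of u and w
  rcases u with a | p
  · rcases w with b | q
    · rcases hadj with ⟨hd, _⟩ | ⟨hd, hna⟩ | ⟨hd, _⟩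
      · exfalso
        have : L (Sum.inl a) = L (Sum.inl b) := by simp [L, hd]
        omega
      · -- dist s b = dist s a + 1 : the gap-2 case
        have hLu : L (Sum.inl a) = 2 * G.dist s a.1 := rfl
        have hLw : L (Sum.inl b) = 2 * G.dist s a.1 + 2 := by simp [L, hd]; ring
        have hLv : L v = 2 * G.dist s a.1 + 1 := by omega
        rcases v with c' | p
        · exfalso
          have : L (Sum.inl c') = 2 * G.dist s c'.1 := rfl
          omega
        · have hp : (p.1 : ℕ) = G.dist s a.1 := by
            have : L (Sum.inr p) = 2 * (p.1 : ℕ) + 1 := rfl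
            omega
          exact Or.inl (Or.inl hp.symm)
      · exfalso
        have hLu : L (Sum.inl a) = 2 * (G.dist s b.1 + 1) := by simp [L, hd]
        have hLw : L (Sum.inl b) = 2 * G.dist s b.1 := rfl
        omega
    · exfalso
      rcases hadj with hd | hd
      · have hLu : L (Sum.inl a) = 2 * (q.1 : ℕ) := by simp [L, hd]
        have hLw : L (Sum.inr q) = 2 * (q.1 : ℕ) + 1 := rfl
        omega
      · have hLu : L (Sum.inl a) = 2 * (q.1 : ℕ) + 2 := by simp [L, hd]; ring
        have hLw : L (Sum.inr q) = 2 * (q.1 : ℕ) + 1 := rfl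
        omega
  · rcases w with b | q
    · exfalso
      rcases hadj with hd | hd
      · have hLw : L (Sum.inl b) = 2 * (p.1 : ℕ) := by simp [L, hd]
        have hLu : L (Sum.inr p) = 2 * (p.1 : ℕ) + 1 := rfl
        omega
      · have hLw : L (Sum.inl b) = 2 * (p.1 : ℕ) + 2 := by simp [L, hd]; ring
        have hLu : L (Sum.inr p) = 2 * (p.1 : ℕ) + 1 := rfl
        omega
    · exfalso
      have : L (Sum.inr p) = L (Sum.inr q) := by simp [L, hadj.1]
      omega
end
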